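/- Cauchy estimate for graphs of leaves: let p, q ≥ 1, let B ⊆ ℝᵖ be the closed ball of radius r_B > 0 centered at 0, let J ⊆ ℝ^q be a closed ball centered at 0, let C > 0 with r_B·C < 1, and let λ, μ, ν : B × J → (ℝᵖ →L[ℝ] ℝ^q) be continuous maps (with the operator norm on continuous linear maps), where λ is C-Lipschitz with respect to the Euclidean distance on B × J. Let t ∈ J, and let f, g : B → J be differentiable maps with f(0) = g(0) = t such that for all z ∈ B the derivative of f at z equals μ(z, f(z)) and the derivative of g at z equals ν(z, g(z)). Then for all z ∈ B: ‖f(z) − g(z)‖ ≤ (r_B/(1 − r_B·C))·(sup_{B×J}‖μ − λ‖ + sup_{B×J}‖ν − λ‖). -/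
import Mathlib


open Metric Set

set_option maxHeartbeats 1000000

/-- Cauchy estimate for graphs of leaves. If `f, g : B → J` are
graphs of local leaves of the distributions encoded by `μ` and `ν` through the
point `(0,t)`, and `λ` is `C`-Lipschitz (w.r.t. the Euclidean distance on
`B × J`), then `‖f − g‖` is controlled by the sup-distances of `μ` and `ν`
from `λ` on `B × J`. -/
theorem stmt_14 (p q : ℕ) (hp : 1 ≤ p) (hq : 1 ≤ q)
    (rB rJ C : ℝ) (hrB : 0 < rB) (hC : 0 < C) (hrBC : rB * C < 1)
    (lam mu nu : EuclideanSpace ℝ (Fin p) × EuclideanSpace ℝ (Fin q) →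
      (EuclideanSpace ℝ (Fin p) →L[ℝ] EuclideanSpace ℝ (Fin q)))
    (hlam : ContinuousOn lam (closedBall 0 rB ×ˢ closedBall 0 rJ))
    (hmu : ContinuousOn mu (closedBall 0 rB ×ˢ closedBall 0 rJ))
    (hnu : ContinuousOn nu (closedBall 0 rB ×ˢ closedBall 0 rJ))
    (hlip : ∀ x ∈ closedBall (0 : EuclideanSpace ℝ (Fin p)) rB ×ˢ
        closedBall (0 : EuclideanSpace ℝ (Fin q)) rJ,
      ∀ y ∈ closedBall (0 : EuclideanSpace ℝ (Fin p)) rB ×ˢ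
        closedBall (0 : EuclideanSpace ℝ (Fin q)) rJ,
      ‖lam x - lam y‖ ≤ C * Real.sqrt (dist x.1 y.1 ^ 2 + dist x.2 y.2 ^ 2))
    (t : EuclideanSpace ℝ (Fin q)) (ht : t ∈ closedBall 0 rJ)
    (f g : EuclideanSpace ℝ (Fin p) → EuclideanSpace ℝ (Fin q))
    (hfJ : ∀ z ∈ closedBall (0 : EuclideanSpace ℝ (Fin p)) rB, f z ∈ closedBall 0 rJ)
    (hgJ : ∀ z ∈ closedBall (0 : EuclideanSpace ℝ (Fin p)) rB, g z ∈ closedBall 0 rJ)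
    (hf0 : f 0 = t) (hg0 : g 0 = t)
    (hfd : ∀ z ∈ closedBall (0 : EuclideanSpace ℝ (Fin p)) rB,
      HasFDerivWithinAt f (mu (z, f z)) (closedBall 0 rB) z)
    (hgd : ∀ z ∈ closedBall (0 : EuclideanSpace ℝ (Fin p)) rB,
      HasFDerivWithinAt g (nu (z, g z)) (closedBall 0 rB) z) :
    ∀ z ∈ closedBall (0 : EuclideanSpace ℝ (Fin p)) rB,
      ‖f z - g z‖ ≤ rB / (1 - rB * C) *
        (sSup ((fun x => ‖mu x - lam x‖) ''
            (closedBall 0 rB ×ˢ closedBall 0 rJ)) +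
         sSup ((fun x => ‖nu x - lam x‖) ''
            (closedBall 0 rB ×ˢ closedBall 0 rJ))) := by
  intro z hz
  set B := closedBall (0 : EuclideanSpace ℝ (Fin p)) rB with hB
  set J := closedBall (0 : EuclideanSpace ℝ (Fin q)) rJ with hJ
  set K := B ×ˢ J with hK
  have hKc : IsCompact K := (isCompact_closedBall _ _).prod (isCompact_closedBall _ _)
  have h0B : (0 : EuclideanSpace ℝ (Fin p)) ∈ B := mem_closedBall_self hrB.le
  have hKne : K.Nonempty := ⟨(0, t), Set.mk_mem_prod h0B ht⟩
  set M := sSup ((fun x => ‖mu x - lam x‖) '' K) with hM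
  set N := sSup ((fun x => ‖nu x - lam x‖) '' K) with hN
  have hMbdd : BddAbove ((fun x => ‖mu x - lam x‖) '' K) :=
    hKc.bddAbove_image ((hmu.sub hlam).norm)
  have hNbdd : BddAbove ((fun x => ‖nu x - lam x‖) '' K) :=
    hKc.bddAbove_image ((hnu.sub hlam).norm)
  have hMle : ∀ x ∈ K, ‖mu x - lam x‖ ≤ M := fun x hx =>
    le_csSup hMbdd (mem_image_of_mem _ hx)
  have hNle : ∀ x ∈ K, ‖nu x - lam x‖ ≤ N := fun x hx =>
    le_csSup hNbdd (mem_image_of_mem _ hx)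
  -- sup of ‖f - g‖ on B
  have hSbdd : BddAbove ((fun w => ‖f w - g w‖) '' B) := by
    refine ⟨2 * rJ, ?_⟩
    rintro _ ⟨w, hw, rfl⟩
    have h1 := hfJ w hw
    have h2 := hgJ w hw
    simp only [hJ, mem_closedBall, dist_zero_right] at h1 h2
    calc ‖f w - g w‖ ≤ ‖f w‖ + ‖g w‖ := norm_sub_le _ _
      _ ≤ 2 * rJ := by linarith
  set S := sSup ((fun w => ‖f w - g w‖) '' B) with hS
  have hSle : ∀ w ∈ B, ‖f w - g w‖ ≤ S := fun w hw =>
    le_csSup hSbdd (mem_image_of_mem _ hw)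
  -- mean value bound: for every w ∈ B, ‖f w - g w‖ ≤ (M + N + C * S) * rB
  have key : ∀ w ∈ B, ‖f w - g w‖ ≤ (M + N + C * S) * rB := by
    intro w hw
    have hconv : Convex ℝ B := convex_closedBall _ _
    have hderiv : ∀ x ∈ B, HasFDerivWithinAt (fun u => f u - g u)
        (mu (x, f x) - nu (x, g x)) B x := fun x hx => (hfd x hx).sub (hgd x hx)
    have hbound : ∀ x ∈ B, ‖mu (x, f x) - nu (x, g x)‖ ≤ M + N + C * S := by
      intro x hx
      have hxf : ((x, f x) : _ × _) ∈ K := (Set.mk_mem_prod hx (hfJ x hx))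
      have hxg : ((x, g x) : _ × _) ∈ K := (Set.mk_mem_prod hx (hgJ x hx))
      have hlipx := hlip (x, f x) hxf (x, g x) hxg
      have hd : Real.sqrt (dist x x ^ 2 + dist (f x) (g x) ^ 2) = dist (f x) (g x) := by
        simp [Real.sqrt_sq dist_nonneg]
      rw [hd] at hlipx
      have hdS : dist (f x) (g x) ≤ S := by
        rw [dist_eq_norm]; exact hSle x hx
      have : mu (x, f x) - nu (x, g x)
          = (mu (x, f x) - lam (x, f x)) + (lam (x, f x) - lam (x, g x))
            + (lam (x, g x) - nu (x, g x)) := by abel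
      rw [this]
      have h1 := hMle _ hxf
      have h2 := hNle _ hxg
      have h3 : ‖lam (x, g x) - nu (x, g x)‖ = ‖nu (x, g x) - lam (x, g x)‖ :=
        norm_sub_rev _ _
      calc ‖_ + _ + _‖ ≤ ‖mu (x, f x) - lam (x, f x)‖ + ‖lam (x, f x) - lam (x, g x)‖
            + ‖lam (x, g x) - nu (x, g x)‖ := norm_add₃_le
        _ ≤ M + C * S + N := by
            rw [h3]
            have : C * dist (f x) (g x) ≤ C * S := by
              exact mul_le_mul_of_nonneg_left hdS hC.le
            linarith
        _ = M + N + C * S := by ring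
    have hwz : ‖w - 0‖ ≤ rB := by
      simpa [← dist_zero_right] using mem_closedBall.mp hw
    calc ‖f w - g w‖ = ‖(f w - g w) - (f 0 - g 0)‖ := by rw [hf0, hg0]; abel_nf
      _ ≤ (M + N + C * S) * ‖w - 0‖ := by
          simpa using hconv.norm_image_sub_le_of_norm_hasFDerivWithin_le hderiv hbound h0B hw
      _ ≤ (M + N + C * S) * rB := by
          apply mul_le_mul_of_nonneg_left hwz
          have hM0 : 0 ≤ M := le_trans (norm_nonneg _) (hMle _ (Set.mk_mem_prod h0B ht))
          have hN0 : 0 ≤ N := le_trans (norm_nonneg _) (hNle _ (Set.mk_mem_prod h0B ht))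
          have hS0 : 0 ≤ S := le_trans (norm_nonneg _) (hSle 0 h0B)
          positivity
  have hM0 : 0 ≤ M := le_trans (norm_nonneg _) (hMle _ (Set.mk_mem_prod h0B ht))
  have hN0 : 0 ≤ N := le_trans (norm_nonneg _) (hNle _ (Set.mk_mem_prod h0B ht))
  have hSle2 : S ≤ (M + N + C * S) * rB := by
    refine csSup_le ⟨‖f 0 - g 0‖, mem_image_of_mem (fun w => ‖f w - g w‖) h0B⟩ ?_
    rintro _ ⟨w, hw, rfl⟩
    exact key w hw
  have h1 : 0 < 1 - rB * C := by linarith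
  have hSfin : S ≤ rB / (1 - rB * C) * (M + N) := by
    rw [div_mul_eq_mul_div, le_div_iff₀ h1]
    nlinarith
  exact (hSle z hz).trans hSfin
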